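/- Let V be a real vector space of finite dimension d. Define the operator λ on polyforms by λ(Ψ_m) = (−1)^{⌊m/2⌋} Ψ_m on each homogeneous m-form component Ψ_m, and define the Mukai pairing of polyforms Ω, Ψ ∈ Λ•V* as ⟨Ω, Ψ⟩_M = (Ω ∧ λ(Ψ))_top, the degree-d component of Ω ∧ λ(Ψ) (an element of Λ^dV*). Then the Mukai pairing is invariant under B-transforms: for every alternating 2-form ω on V, ⟨e^ω ∧ Ω, e^ω ∧ Ψ⟩_M = ⟨Ω, Ψ⟩_M, where e^ω = Σ_k ω^{∧k}/k!. -/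

import Mathlib

open Module

set_option synthInstance.maxHeartbeats 1000000
set_option maxHeartbeats 1000000
set_option linter.unusedSectionVars false

/-- The operator `λ` on polyforms, multiplying the degree-`m` component by `(−1)^⌊m/2⌋`.
(Components of degree `m > dim V` vanish, so the finite sum suffices.) -/
noncomputable def lambdaOp {V : Type*} [AddCommGroup V] [Module ℝ V] [FiniteDimensional ℝ V]
    (Ψ : ExteriorAlgebra ℝ (Dual ℝ V)) : ExteriorAlgebra ℝ (Dual ℝ V) :=
  ∑ m ∈ Finset.range (Module.finrank ℝ V + 1),
    ((-1 : ℝ) ^ (m / 2)) • GradedAlgebra.proj (fun i : ℕ => ⋀[ℝ]^i (Dual ℝ V)) m Ψ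

/-- The Mukai pairing `⟨Ω,Ψ⟩_M = (Ω ∧ λ(Ψ))_top`, the degree-`d` component
(`d = dim V`) of `Ω ∧ λ(Ψ)`. -/
noncomputable def mukaiPairing {V : Type*} [AddCommGroup V] [Module ℝ V] [FiniteDimensional ℝ V]
    (Ω Ψ : ExteriorAlgebra ℝ (Dual ℝ V)) : ExteriorAlgebra ℝ (Dual ℝ V) :=
  GradedAlgebra.proj (fun i : ℕ => ⋀[ℝ]^i (Dual ℝ V)) (Module.finrank ℝ V) (Ω * lambdaOp Ψ)

/-- The exponential `e^ω = Σ_k ω^k / k!` of a 2-form `ω ∈ Λ²V*` (a finite sum). -/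
noncomputable def expForm {V : Type*} [AddCommGroup V] [Module ℝ V]
    [FiniteDimensional ℝ V] (ω : ExteriorAlgebra ℝ (Dual ℝ V)) :
    ExteriorAlgebra ℝ (Dual ℝ V) :=
  ∑ k ∈ Finset.range (Module.finrank ℝ V + 1), ((Nat.factorial k : ℝ)⁻¹) • ω ^ k

namespace MukaiAux

/-- The alternating-sum coefficient identity, extracted from `exp(X)·exp(−X) = 1`
for formal power series. -/
lemma alt_sum (n : ℕ) :
    ∑ p ∈ Finset.HasAntidiagonal.antidiagonal n,
      ((Nat.factorial p.1 : ℝ)⁻¹ * ((-1 : ℝ)^p.2 * (Nat.factorial p.2 : ℝ)⁻¹)) =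
      if n = 0 then 1 else 0 := by
  have h := congrArg (PowerSeries.coeff n) (PowerSeries.exp_mul_exp_neg_eq_one (A := ℝ))
  rw [PowerSeries.coeff_mul, PowerSeries.coeff_one] at h
  rw [← h]
  refine Finset.sum_congr rfl fun p _ => ?_
  rw [PowerSeries.evalNegHom, PowerSeries.coeff_rescale, PowerSeries.coeff_exp,
    PowerSeries.coeff_exp, eq_ratCast, eq_ratCast]
  push_cast
  ring

variable {V : Type*} [AddCommGroup V] [Module ℝ V] [FiniteDimensional ℝ V]

lemma power_eq_bot {n : ℕ} (hn : Module.finrank ℝ V < n) :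
    (⋀[ℝ]^n (Dual ℝ V)) = ⊥ := by
  rw [← ExteriorAlgebra.ιMulti_span_fixedDegree, Submodule.span_eq_bot]
  rintro x ⟨v, rfl⟩
  apply AlternatingMap.map_linearDependent
  intro h
  have := h.fintype_card_le_finrank
  rw [Fintype.card_fin, Subspace.dual_finrank_eq] at this
  omega

lemma eq_zero_of_mem {n : ℕ} (hn : Module.finrank ℝ V < n)
    {x : ExteriorAlgebra ℝ (Dual ℝ V)} (hx : x ∈ ⋀[ℝ]^n (Dual ℝ V)) : x = 0 := by
  rw [power_eq_bot hn] at hx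
  simpa using hx

lemma mul_ι_of_mem {n : ℕ} {x : ExteriorAlgebra ℝ (Dual ℝ V)}
    (hx : x ∈ ⋀[ℝ]^n (Dual ℝ V)) (v : Dual ℝ V) :
    x * ExteriorAlgebra.ι ℝ v = ((-1 : ℝ)^n) • (ExteriorAlgebra.ι ℝ v * x) := by
  induction hx using Submodule.pow_induction_on_left' with
  | algebraMap r => simp [Algebra.commutes]
  | add x y i hx hy ihx ihy => simp [add_mul, mul_add, ihx, ihy, smul_add]
  | mem_mul m hm i z hz ih =>
      obtain ⟨a, rfl⟩ := hm
      have hav : ExteriorAlgebra.ι ℝ a * ExteriorAlgebra.ι ℝ v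
          = -(ExteriorAlgebra.ι ℝ v * ExteriorAlgebra.ι ℝ a) :=
        eq_neg_of_add_eq_zero_left (ExteriorAlgebra.ι_add_mul_swap a v)
      rw [mul_assoc, ih, mul_smul_comm, ← mul_assoc, hav, pow_succ]
      simp [mul_assoc, smul_smul, mul_comm]

lemma commute_of_sq {ω : ExteriorAlgebra ℝ (Dual ℝ V)}
    (hω : ω ∈ ⋀[ℝ]^2 (Dual ℝ V)) (x : ExteriorAlgebra ℝ (Dual ℝ V)) : Commute ω x := by
  induction x using CliffordAlgebra.induction with
  | algebraMap r => exact (Algebra.commutes r ω).symm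
  | ι v => show ω * _ = _ * ω; rw [mul_ι_of_mem hω v]; norm_num
  | mul x y hx hy => exact hx.mul_right hy
  | add x y hx hy => exact hx.add_right hy

lemma lambdaOp_zero : lambdaOp (0 : ExteriorAlgebra ℝ (Dual ℝ V)) = 0 := by
  simp [lambdaOp]

lemma lambdaOp_add (x y : ExteriorAlgebra ℝ (Dual ℝ V)) :
    lambdaOp (x + y) = lambdaOp x + lambdaOp y := by
  simp [lambdaOp, map_add, smul_add, Finset.sum_add_distrib]

lemma lambdaOp_smul (r : ℝ) (x : ExteriorAlgebra ℝ (Dual ℝ V)) :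
    lambdaOp (r • x) = r • lambdaOp x := by
  simp [lambdaOp, map_smul, Finset.smul_sum, smul_smul, mul_comm]

lemma lambdaOp_sum {ι : Type*} (s : Finset ι) (f : ι → ExteriorAlgebra ℝ (Dual ℝ V)) :
    lambdaOp (∑ i ∈ s, f i) = ∑ i ∈ s, lambdaOp (f i) := by
  classical
  induction s using Finset.induction with
  | empty => simp [lambdaOp_zero]
  | insert _ _ h ih => simp [Finset.sum_insert h, lambdaOp_add, ih]

lemma lambdaOp_of_mem {n : ℕ} {x : ExteriorAlgebra ℝ (Dual ℝ V)}
    (hx : x ∈ ⋀[ℝ]^n (Dual ℝ V)) :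
    lambdaOp x = ((-1 : ℝ)^(n / 2)) • x := by
  by_cases hn : n ≤ Module.finrank ℝ V
  · rw [lambdaOp, Finset.sum_eq_single n]
    · rw [GradedAlgebra.proj_apply,
        DirectSum.decompose_of_mem_same (ℳ := fun i : ℕ => ⋀[ℝ]^i (Dual ℝ V)) hx]
    · intro m _ hmn
      rw [GradedAlgebra.proj_apply,
        DirectSum.decompose_of_mem_ne (ℳ := fun i : ℕ => ⋀[ℝ]^i (Dual ℝ V)) hx (Ne.symm hmn),
        smul_zero]
    · intro hn'
      exact absurd (Finset.mem_range.mpr (by omega)) hn'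
  · rw [eq_zero_of_mem (by omega) hx, lambdaOp_zero, smul_zero]

lemma pow_mem {ω : ExteriorAlgebra ℝ (Dual ℝ V)} (hω : ω ∈ ⋀[ℝ]^2 (Dual ℝ V)) (k : ℕ) :
    ω ^ k ∈ ⋀[ℝ]^(2 * k) (Dual ℝ V) := by
  have h := SetLike.pow_mem_graded (A := fun i : ℕ => ⋀[ℝ]^i (Dual ℝ V)) k hω
  rwa [smul_eq_mul, mul_comm] at h

lemma pow_eq_zero {ω : ExteriorAlgebra ℝ (Dual ℝ V)} (hω : ω ∈ ⋀[ℝ]^2 (Dual ℝ V)) {k : ℕ}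
    (hk : Module.finrank ℝ V < k) : ω ^ k = 0 :=
  eq_zero_of_mem (by omega) (pow_mem hω k)

lemma expForm_neg (ω : ExteriorAlgebra ℝ (Dual ℝ V)) :
    expForm (-ω) = ∑ k ∈ Finset.range (Module.finrank ℝ V + 1),
      ((-1 : ℝ)^k * (Nat.factorial k : ℝ)⁻¹) • ω ^ k := by
  unfold expForm
  refine Finset.sum_congr rfl fun k _ => ?_
  rw [show (-ω) = (-1 : ℝ) • ω by simp, smul_pow, smul_smul, mul_comm]

lemma commute_expForm {ω : ExteriorAlgebra ℝ (Dual ℝ V)} (hω : ω ∈ ⋀[ℝ]^2 (Dual ℝ V))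
    (x : ExteriorAlgebra ℝ (Dual ℝ V)) : Commute (expForm ω) x := by
  refine Commute.sum_left _ _ _ fun k _ => ?_
  exact ((commute_of_sq hω x).pow_left k).smul_left _

lemma exp_mul_exp_neg {ω : ExteriorAlgebra ℝ (Dual ℝ V)} (hω : ω ∈ ⋀[ℝ]^2 (Dual ℝ V)) :
    expForm ω * expForm (-ω) = 1 := by
  classical
  set d := Module.finrank ℝ V with hd
  set R := Finset.range (d + 1) with hR
  set F : ℕ × ℕ → ExteriorAlgebra ℝ (Dual ℝ V) := fun p =>
    ((Nat.factorial p.1 : ℝ)⁻¹ * ((-1 : ℝ)^p.2 * (Nat.factorial p.2 : ℝ)⁻¹)) • ω ^ (p.1 + p.2)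
    with hF
  have step1 : expForm ω * expForm (-ω) = ∑ p ∈ R ×ˢ R, F p := by
    rw [expForm_neg, expForm, Finset.sum_mul_sum, Finset.sum_product]
    refine Finset.sum_congr rfl fun k _ => Finset.sum_congr rfl fun l _ => ?_
    rw [hF]
    simp only [smul_mul_assoc, mul_smul_comm, smul_smul, pow_add]
    ring_nf
  have hvanish : ∀ p : ℕ × ℕ, d < p.1 + p.2 → F p = 0 := by
    intro p hp
    rw [hF]
    simp [pow_eq_zero hω hp]
  have hsub : R.biUnion Finset.HasAntidiagonal.antidiagonal ⊆ R ×ˢ R := by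
    intro p hp
    rw [Finset.mem_biUnion] at hp
    obtain ⟨n, hn, hpn⟩ := hp
    rw [Finset.HasAntidiagonal.mem_antidiagonal] at hpn
    rw [hR, Finset.mem_range] at hn
    rw [Finset.mem_product, hR, Finset.mem_range, Finset.mem_range]
    omega
  have step2 : ∑ p ∈ R ×ˢ R, F p = ∑ p ∈ R.biUnion Finset.HasAntidiagonal.antidiagonal, F p := by
    refine (Finset.sum_subset hsub fun p hp hnp => ?_).symm
    refine hvanish p ?_
    by_contra hle
    push_neg at hle
    exact hnp (Finset.mem_biUnion.mpr ⟨p.1 + p.2, by rw [hR, Finset.mem_range]; omega,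
      Finset.HasAntidiagonal.mem_antidiagonal.mpr rfl⟩)
  have hdisj : (R : Set ℕ).PairwiseDisjoint Finset.HasAntidiagonal.antidiagonal := by
    intro m _ n _ hmn
    refine Finset.disjoint_left.mpr fun p hpm hpn => hmn ?_
    rw [Finset.HasAntidiagonal.mem_antidiagonal] at hpm hpn
    omega
  have step3 : ∑ p ∈ R.biUnion Finset.HasAntidiagonal.antidiagonal, F p =
      ∑ n ∈ R, ∑ p ∈ Finset.HasAntidiagonal.antidiagonal n, F p := Finset.sum_biUnion hdisj
  have step4 : ∀ n : ℕ, ∑ p ∈ Finset.HasAntidiagonal.antidiagonal n, F p =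
      (if n = 0 then (1 : ℝ) else 0) • ω ^ n := by
    intro n
    rw [← alt_sum n, Finset.sum_smul]
    refine Finset.sum_congr rfl fun p hp => ?_
    rw [Finset.HasAntidiagonal.mem_antidiagonal] at hp
    rw [hF]
    dsimp only
    rw [hp]
  rw [step1, step2, step3]
  rw [Finset.sum_congr rfl fun n _ => step4 n]
  rw [Finset.sum_eq_single 0]
  · simp
  · intro n _ hn
    simp [hn]
  · intro h
    exact absurd (by rw [hR, Finset.mem_range]; omega) h

lemma lambda_exp_mul {ω : ExteriorAlgebra ℝ (Dual ℝ V)} (hω : ω ∈ ⋀[ℝ]^2 (Dual ℝ V))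
    (Ψ : ExteriorAlgebra ℝ (Dual ℝ V)) :
    lambdaOp (expForm ω * Ψ) = expForm (-ω) * lambdaOp Ψ := by
  induction Ψ using DirectSum.Decomposition.inductionOn
      (ℳ := fun i : ℕ => ⋀[ℝ]^i (Dual ℝ V)) with
  | zero => simp [lambdaOp_zero]
  | add x y hx hy => rw [mul_add, lambdaOp_add, hx, hy, lambdaOp_add, mul_add]
  | homogeneous m =>
      rename_i i
      have hx : (m : ExteriorAlgebra ℝ (Dual ℝ V)) ∈ ⋀[ℝ]^i (Dual ℝ V) := m.2
      set x := (m : ExteriorAlgebra ℝ (Dual ℝ V))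
      have lhs : lambdaOp (expForm ω * x) =
          ∑ k ∈ Finset.range (Module.finrank ℝ V + 1),
            ((Nat.factorial k : ℝ)⁻¹ * (-1 : ℝ)^((2 * k + i) / 2)) • (ω ^ k * x) := by
        rw [expForm, Finset.sum_mul]
        rw [show ∀ s : Finset ℕ, ∑ k ∈ s, ((Nat.factorial k : ℝ)⁻¹ • ω ^ k) * x
            = ∑ k ∈ s, (Nat.factorial k : ℝ)⁻¹ • (ω ^ k * x) from
          fun s => Finset.sum_congr rfl fun k _ => smul_mul_assoc _ _ _]
        rw [lambdaOp_sum]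
        refine Finset.sum_congr rfl fun k _ => ?_
        rw [lambdaOp_smul,
          lambdaOp_of_mem (SetLike.mul_mem_graded (pow_mem hω k) hx), smul_smul]
      have rhs : expForm (-ω) * lambdaOp x =
          ∑ k ∈ Finset.range (Module.finrank ℝ V + 1),
            (((-1 : ℝ)^k * (Nat.factorial k : ℝ)⁻¹) * (-1 : ℝ)^(i / 2)) • (ω ^ k * x) := by
        rw [expForm_neg, lambdaOp_of_mem hx, Finset.sum_mul]
        refine Finset.sum_congr rfl fun k _ => ?_
        rw [smul_mul_assoc, mul_smul_comm, smul_smul]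
      rw [lhs, rhs]
      refine Finset.sum_congr rfl fun k _ => ?_
      have hdiv : (2 * k + i) / 2 = k + i / 2 := by omega
      rw [hdiv, pow_add]
      ring_nf

end MukaiAux

theorem statement7 {V : Type*} [AddCommGroup V] [Module ℝ V] [FiniteDimensional ℝ V]
    (ω : ExteriorAlgebra ℝ (Dual ℝ V)) (hω : ω ∈ ⋀[ℝ]^2 (Dual ℝ V))
    (Ω Ψ : ExteriorAlgebra ℝ (Dual ℝ V)) :
    mukaiPairing (expForm ω * Ω) (expForm ω * Ψ) = mukaiPairing Ω Ψ := by
  have hneg : -ω ∈ ⋀[ℝ]^2 (Dual ℝ V) := neg_mem hω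
  unfold mukaiPairing
  rw [MukaiAux.lambda_exp_mul hω Ψ]
  have hcomm : (MukaiAux.commute_expForm hneg Ω) = (MukaiAux.commute_expForm hneg Ω) := rfl
  have hrearr : expForm ω * Ω * (expForm (-ω) * lambdaOp Ψ)
      = (expForm ω * expForm (-ω)) * (Ω * lambdaOp Ψ) := by
    have h1 : expForm (-ω) * Ω = Ω * expForm (-ω) := MukaiAux.commute_expForm hneg Ω
    calc expForm ω * Ω * (expForm (-ω) * lambdaOp Ψ)
        = expForm ω * ((Ω * expForm (-ω)) * lambdaOp Ψ) := by
          rw [mul_assoc, ← mul_assoc Ω]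
      _ = expForm ω * ((expForm (-ω) * Ω) * lambdaOp Ψ) := by rw [h1]
      _ = (expForm ω * expForm (-ω)) * (Ω * lambdaOp Ψ) := by
          simp only [mul_assoc]
  rw [hrearr, MukaiAux.exp_mul_exp_neg hω, one_mul]
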